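/- Let K be a ramified quadratic field extension of ℚ₂. Then the 2-adic valuation of the discriminant of K/ℚ₂ is either 2 or 3. -/

import Mathlib

/-!
For a ramified quadratic extension `K/ℚ₂`, the `2`-adic valuation of the discriminant is
`2` or `3`.

Since `K/ℚ₂` is ramified (residue degree `1`), the `2`-adic valuation `δ` of the
discriminant equals the exponent of the different ideal `𝔡_{K/ℚ₂} = 𝔭_K^δ`, which is
characterized by the inverse different: `{x : Tr_{K/ℚ₂}(x 𝒪_K) ⊆ ℤ₂} = 𝔭_K^{-δ}`
(hypothesis `hδ` below).
-/

/-- The normalized discrete valuation on a finite extension `K` of `ℚ_p`, together with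
the ramification index `e`.  (Such data exists and is unique for every finite extension.) -/
structure PadicValData (p : ℕ) [Fact p.Prime] (K : Type*) [Field K] [Algebra ℚ_[p] K] where
  /-- the normalized valuation (with junk value at `0`) -/
  v : K → ℤ
  /-- the ramification index of `K/ℚ_p` -/
  e : ℕ
  v_mul : ∀ x y : K, x ≠ 0 → y ≠ 0 → v (x * y) = v x + v y
  v_add : ∀ x y : K, x ≠ 0 → y ≠ 0 → x + y ≠ 0 → min (v x) (v y) ≤ v (x + y)
  v_surj : ∀ n : ℤ, ∃ x : K, x ≠ 0 ∧ v x = n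
  v_compat : ∀ x : ℚ_[p], x ≠ 0 → v (algebraMap ℚ_[p] K x) = (e : ℤ) * x.valuation

section Aux

variable {K : Type*} [Field K] [Algebra ℚ_[2] K]

namespace QuadAux

lemma alg_ne (c : ℚ_[2]) (hc : c ≠ 0) : algebraMap ℚ_[2] K c ≠ 0 := by
  simpa using hc

lemma v_one (D : PadicValData 2 K) : D.v 1 = 0 := by
  have h := D.v_mul 1 1 one_ne_zero one_ne_zero
  rw [mul_one] at h
  omega

lemma v_neg_one (D : PadicValData 2 K) : D.v (-1) = 0 := by
  have h := D.v_mul (-1) (-1) (by norm_num) (by norm_num)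
  rw [neg_mul_neg, one_mul, v_one D] at h
  omega

lemma v_neg (D : PadicValData 2 K) (x : K) (hx : x ≠ 0) : D.v (-x) = D.v x := by
  have h := D.v_mul (-1) x (by norm_num) hx
  rw [neg_one_mul] at h
  rw [h, v_neg_one D, zero_add]

lemma v_inv (D : PadicValData 2 K) (x : K) (hx : x ≠ 0) : D.v x⁻¹ = -D.v x := by
  have h := D.v_mul x x⁻¹ hx (inv_ne_zero hx)
  rw [mul_inv_cancel₀ hx, v_one D] at h
  omega

/-- strict ultrametric equality -/
lemma v_strict (D : PadicValData 2 K) (x y : K) (hx : x ≠ 0) (hy : y ≠ 0)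
    (h : D.v x < D.v y) : x + y ≠ 0 ∧ D.v (x + y) = D.v x := by
  have hne : x + y ≠ 0 := by
    intro h0
    have hyx : y = -x := eq_neg_of_add_eq_zero_right h0
    rw [hyx, v_neg D x hx] at h
    omega
  refine ⟨hne, ?_⟩
  have h1 := D.v_add x y hx hy hne
  rw [min_eq_left h.le] at h1
  by_contra hne2
  have hlt : D.v x < D.v (x + y) := lt_of_le_of_ne h1 (Ne.symm hne2)
  have h2 := D.v_add (x + y) (-y) hne (neg_ne_zero.2 hy)
    (by rw [add_neg_cancel_right]; exact hx)
  rw [add_neg_cancel_right, v_neg D y hy] at h2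
  have h3 := lt_min hlt h
  omega

lemma v_alg (D : PadicValData 2 K) (hram : D.e = 2) (c : ℚ_[2]) (hc : c ≠ 0) :
    D.v (algebraMap ℚ_[2] K c) = 2 * c.valuation := by
  rw [D.v_compat c hc, hram]
  norm_num

lemma val_two_q : (2 : ℚ_[2]).valuation = 1 := by
  rw [show (2 : ℚ_[2]) = ((2 : ℕ) : ℚ_[2]) by norm_num]
  exact Padic.valuation_p

lemma norm_two_q : ‖(2 : ℚ_[2])‖ = 1 / 2 := by
  have h := Padic.norm_p (p := 2)
  rw [show ((2 : ℕ) : ℚ_[2]) = (2 : ℚ_[2]) by norm_num] at h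
  rw [h]
  norm_num

lemma norm_two_inv_q : ‖(2 : ℚ_[2])⁻¹‖ = 2 := by
  rw [norm_inv, norm_two_q]
  norm_num

lemma v_alg_two (D : PadicValData 2 K) (hram : D.e = 2) :
    D.v (algebraMap ℚ_[2] K 2) = 2 := by
  rw [v_alg D hram 2 two_ne_zero, val_two_q]
  norm_num

lemma val_neg_q (u : ℚ_[2]) (hu : u ≠ 0) : (-u).valuation = u.valuation := by
  have h := Padic.valuation_mul (p := 2) (x := -1) (y := u) (by norm_num) hu
  rw [neg_one_mul] at h
  have hm : ((-1 : ℚ_[2])).valuation = 0 := by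
    have h2 := Padic.valuation_mul (p := 2) (x := (-1 : ℚ_[2])) (y := -1)
      (by norm_num) (by norm_num)
    rw [neg_mul_neg, one_mul, Padic.valuation_one] at h2
    omega
  rw [h, hm, zero_add]

/-- a `2`-adic unit is congruent to `1` mod `2`:  `u ≠ -1`, `v(u) = 0` implies
`v(u+1) ≥ 1`. -/
lemma unit_add_one (u : ℚ_[2]) (hu : u ≠ 0) (h0 : u.valuation = 0) (h1 : u ≠ -1) :
    u + 1 ≠ 0 ∧ 1 ≤ (u + 1).valuation := by
  have hnorm : ‖u‖ = 1 := by
    rw [Padic.norm_eq_zpow_neg_valuation hu, h0]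
    norm_num
  set U : ℤ_[2] := ⟨u, le_of_eq hnorm⟩ with hU
  have hUnorm : ‖U‖ = 1 := hnorm
  have htz : PadicInt.toZMod U ≠ 0 := by
    intro h
    have hker : U ∈ RingHom.ker (PadicInt.toZMod (p := 2)) := h
    rw [PadicInt.ker_toZMod, PadicInt.maximalIdeal_eq_span_p, Ideal.mem_span_singleton,
      ← PadicInt.norm_lt_one_iff_dvd] at hker
    rw [hUnorm] at hker
    norm_num at hker
  have htz1 : PadicInt.toZMod U = 1 := by
    have : ∀ a : ZMod 2, a ≠ 0 → a = 1 := by decide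
    exact this _ htz
  have htz0 : PadicInt.toZMod (U + 1) = 0 := by
    rw [map_add, map_one, htz1]
    decide
  have hker : U + 1 ∈ RingHom.ker (PadicInt.toZMod (p := 2)) := htz0
  rw [PadicInt.ker_toZMod, PadicInt.maximalIdeal_eq_span_p, Ideal.mem_span_singleton] at hker
  obtain ⟨w, hw⟩ := hker
  have hcoe : u + 1 = (2 : ℚ_[2]) * (w : ℚ_[2]) := by
    have h2 : ((U + 1 : ℤ_[2]) : ℚ_[2]) = u + 1 := by rw [PadicInt.coe_add, PadicInt.coe_one]
    rw [← h2, hw]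
    push_cast
    norm_cast
  have hu1 : u + 1 ≠ 0 := by
    intro h
    exact h1 (eq_neg_of_add_eq_zero_left h)
  refine ⟨hu1, ?_⟩
  have hwne : (w : ℚ_[2]) ≠ 0 := by
    intro h
    rw [h, mul_zero] at hcoe
    exact hu1 hcoe
  have hval : (u + 1).valuation = (2 : ℚ_[2]).valuation + (w : ℚ_[2]).valuation := by
    rw [hcoe, Padic.valuation_mul (by norm_num) hwne]
  have hwv : 0 ≤ (w : ℚ_[2]).valuation := by
    rw [← Padic.norm_le_one_iff_val_nonneg]
    exact PadicInt.norm_le_one w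
  rw [hval, val_two_q]
  omega

lemma unit_sub_one (u : ℚ_[2]) (hu : u ≠ 0) (h0 : u.valuation = 0) (h1 : u ≠ 1) :
    u - 1 ≠ 0 ∧ 1 ≤ (u - 1).valuation := by
  have h := unit_add_one (-u) (neg_ne_zero.2 hu) (by rw [val_neg_q u hu]; exact h0)
    (by intro h; apply h1; have := congrArg Neg.neg h; simpa using this)
  have heq : -u + 1 = -(u - 1) := by ring
  rw [heq] at h
  obtain ⟨hne, hv⟩ := h
  have hne' : u - 1 ≠ 0 := fun hh => hne (by rw [hh, neg_zero])
  rw [val_neg_q (u - 1) hne'] at hv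
  exact ⟨hne', hv⟩

lemma norm_le_half (t : ℚ_[2]) (h : t = 0 ∨ 1 ≤ t.valuation) : ‖t‖ ≤ 1 / 2 := by
  rcases h with rfl | h
  · norm_num
  · have ht : t ≠ 0 := by
      intro h0
      rw [h0, Padic.valuation_zero] at h
      omega
    rw [Padic.norm_eq_zpow_neg_valuation ht]
    have : ((2 : ℕ) : ℝ) ^ (-t.valuation) ≤ ((2 : ℕ) : ℝ) ^ (-1 : ℤ) := by
      apply zpow_le_zpow_right₀ (by norm_num)
      omega
    calc ((2 : ℕ) : ℝ) ^ (-t.valuation) ≤ ((2 : ℕ) : ℝ) ^ (-1 : ℤ) := this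
      _ = 1 / 2 := by norm_num

/-- In a quadratic extension, for `z` not in the base field, `z² = s + t z` with
`t = Tr z`. -/
lemma quad_trace (hquad : Module.finrank ℚ_[2] K = 2) (z : K)
    (hz : ∀ a : ℚ_[2], algebraMap ℚ_[2] K a ≠ z) :
    ∃ s t : ℚ_[2], z * z = algebraMap ℚ_[2] K s + algebraMap ℚ_[2] K t * z ∧
      Algebra.trace ℚ_[2] K z = t := by
  have h1 : LinearIndependent ℚ_[2] ![z, (1 : K)] := by
    rw [linearIndependent_fin2]
    constructor
    · simp
    · intro a ha
      apply hz a
      simpa [Algebra.algebraMap_eq_smul_one] using ha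
  have hcard : Fintype.card (Fin 2) = Module.finrank ℚ_[2] K := by simp [hquad]
  set b := basisOfLinearIndependentOfCardEqFinrank h1 hcard with hb
  have hb0 : b 0 = z := by
    rw [hb, coe_basisOfLinearIndependentOfCardEqFinrank]
    rfl
  have hb1 : b 1 = 1 := by
    rw [hb, coe_basisOfLinearIndependentOfCardEqFinrank]
    rfl
  refine ⟨b.repr (z * z) 1, b.repr (z * z) 0, ?_, ?_⟩
  · have hsum := b.sum_repr (z * z)
    rw [Fin.sum_univ_two, hb0, hb1, Algebra.smul_def, Algebra.smul_def, mul_one] at hsum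
    conv_lhs => rw [← hsum]
    ring
  · rw [Algebra.trace_eq_matrix_trace b z, Matrix.trace_fin_two]
    rw [Algebra.leftMulMatrix_eq_repr_mul, Algebra.leftMulMatrix_eq_repr_mul]
    rw [hb0, hb1, mul_one]
    have hrepr : b.repr z = Finsupp.single 0 1 := by rw [← hb0, b.repr_self]
    rw [hrepr]
    simp

/-- The residue field of `K` is `𝔽₂`: a unit cannot have both `v y = 0` and
`v (y - 1) = 0`. -/
lemma residue (hquad : Module.finrank ℚ_[2] K = 2) (D : PadicValData 2 K)
    (hram : D.e = 2) (y : K) (hy0 : y ≠ 0) (hy1 : y ≠ 1)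
    (h : D.v y = 0) (h1 : D.v (y - 1) = 0) : False := by
  have hy1' : y - 1 ≠ 0 := sub_ne_zero.2 hy1
  obtain ⟨π, hπ0, hπ⟩ := D.v_surj 1
  -- every nonzero element of the form `b + c y` has even valuation
  have even : ∀ b c : ℚ_[2], ¬(b = 0 ∧ c = 0) →
      b • (1 : K) + c • y ≠ 0 ∧ ∃ m : ℤ, D.v (b • (1 : K) + c • y) = 2 * m := by
    intro b c hbc
    by_cases hb : b = 0
    · have hc : c ≠ 0 := fun h' => hbc ⟨hb, h'⟩
      have : c • y ≠ 0 := smul_ne_zero hc hy0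
      refine ⟨by simpa [hb] using this, ⟨c.valuation, ?_⟩⟩
      rw [hb, zero_smul, zero_add, Algebra.smul_def,
        D.v_mul _ y (alg_ne c hc) hy0, v_alg D hram c hc, h]
      ring
    · by_cases hc : c = 0
      · refine ⟨by simpa [hc, Algebra.algebraMap_eq_smul_one] using alg_ne (K := K) b hb,
          ⟨b.valuation, ?_⟩⟩
        rw [hc, zero_smul, add_zero, ← Algebra.algebraMap_eq_smul_one, v_alg D hram b hb]
      · -- both nonzero
        have hbK : b • (1 : K) = algebraMap ℚ_[2] K b := by
          rw [Algebra.algebraMap_eq_smul_one]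
        have hvB : D.v (b • (1 : K)) = 2 * b.valuation := by
          rw [hbK, v_alg D hram b hb]
        have hcy : c • y ≠ 0 := smul_ne_zero hc hy0
        have hvC : D.v (c • y) = 2 * c.valuation := by
          rw [Algebra.smul_def, D.v_mul _ y (alg_ne c hc) hy0, v_alg D hram c hc, h]
          ring
        have hbne : b • (1 : K) ≠ 0 := by
          rw [hbK]; exact alg_ne b hb
        rcases lt_trichotomy b.valuation c.valuation with hlt | heq | hgt
        · obtain ⟨hne, hv⟩ := v_strict D (b • (1 : K)) (c • y) hbne hcy (by omega)
          exact ⟨hne, ⟨b.valuation, by rw [hv, hvB]⟩⟩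
        · -- equal valuations: use the residue assumption
          set u : ℚ_[2] := b / c with hu
          have huc : u ≠ 0 := div_ne_zero hb hc
          have huval : u.valuation = 0 := by
            rw [hu, div_eq_mul_inv, Padic.valuation_mul hb (inv_ne_zero hc)]
            have hinv : (c⁻¹).valuation = -c.valuation := by
              have := Padic.valuation_mul (p := 2) hc (inv_ne_zero hc)
              rw [mul_inv_cancel₀ hc, Padic.valuation_one] at this
              omega
            rw [hinv]
            omega
          have hfac : b • (1 : K) + c • y = c • (algebraMap ℚ_[2] K u + y) := by
            rw [smul_add, hbK, Algebra.smul_def, Algebra.smul_def, ← map_mul]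
            rw [hu, mul_div_cancel₀ b hc]
          have hkey : (algebraMap ℚ_[2] K u + y ≠ 0) ∧
              D.v (algebraMap ℚ_[2] K u + y) = 0 := by
            by_cases hm1 : u = -1
            · have : algebraMap ℚ_[2] K u + y = y - 1 := by
                rw [hm1, map_neg, map_one]; ring
              rw [this]
              exact ⟨hy1', h1⟩
            · obtain ⟨hne1, hval1⟩ := unit_add_one u huc huval hm1
              have hrw : algebraMap ℚ_[2] K u + y =
                  (y - 1) + algebraMap ℚ_[2] K (u + 1) := by
                rw [map_add, map_one]; ring
              have hv1 : D.v (algebraMap ℚ_[2] K (u + 1)) = 2 * (u + 1).valuation := by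
                rw [v_alg D hram _ hne1]
              obtain ⟨hne2, hv2⟩ := v_strict D (y - 1) (algebraMap ℚ_[2] K (u + 1))
                hy1' (alg_ne _ hne1) (by omega)
              rw [hrw]
              exact ⟨hne2, by rw [hv2, h1]⟩
          obtain ⟨hne3, hv3⟩ := hkey
          refine ⟨by rw [hfac]; exact smul_ne_zero hc hne3, ⟨c.valuation, ?_⟩⟩
          rw [hfac, Algebra.smul_def, D.v_mul _ _ (alg_ne c hc) hne3,
            v_alg D hram c hc, hv3]
          ring
        · obtain ⟨hne, hv⟩ := v_strict D (c • y) (b • (1 : K)) hcy hbne (by omega)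
          rw [add_comm (c • y) (b • (1 : K))] at hne hv
          exact ⟨hne, ⟨c.valuation, by rw [hv, hvC]⟩⟩
  -- three vectors in a 2-dimensional space are dependent
  have hfd : FiniteDimensional ℚ_[2] K := Module.finite_of_finrank_pos (by omega)
  have notli : ¬ LinearIndependent ℚ_[2] ![π, (1 : K), y] := by
    intro hli
    have := hli.fintype_card_le_finrank
    rw [hquad] at this
    simp at this
  obtain ⟨g, hsum, i, hgi⟩ := Fintype.not_linearIndependent_iff.1 notli
  rw [Fin.sum_univ_three] at hsum
  simp only [Matrix.cons_val_zero, Matrix.cons_val_one, Matrix.head_cons,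
    Matrix.cons_val_two, Matrix.tail_cons] at hsum
  by_cases hbc : g 1 = 0 ∧ g 2 = 0
  · have hg0 : g 0 ≠ 0 := by
      fin_cases i <;> simp_all
    rw [hbc.1, hbc.2, zero_smul, zero_smul, add_zero, add_zero] at hsum
    exact hπ0 (by simpa [smul_eq_zero, hg0] using hsum)
  · obtain ⟨hwne, m, hwv⟩ := even (g 1) (g 2) hbc
    have hg0 : g 0 ≠ 0 := by
      intro h0
      rw [h0, zero_smul, zero_add] at hsum
      exact hwne hsum
    have hπeq : g 0 • π = -(g 1 • (1 : K) + g 2 • y) := by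
      rw [← add_eq_zero_iff_eq_neg, ← add_assoc]
      exact hsum
    have hvl : D.v (g 0 • π) = 2 * (g 0).valuation + 1 := by
      rw [Algebra.smul_def, D.v_mul _ π (alg_ne _ hg0) hπ0, v_alg D hram _ hg0, hπ]
    have hvr : D.v (-(g 1 • (1 : K) + g 2 • y)) = 2 * m := by
      rw [v_neg D _ hwne, hwv]
    rw [hπeq, hvr] at hvl
    omega

end QuadAux

end Aux

/-- Let `K/ℚ₂` be a ramified quadratic extension.  Then the `2`-adic
valuation `δ` of the discriminant of `K/ℚ₂` is either `2` or `3`. -/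
theorem discr_valuation_ramified_quadratic_two (K : Type*) [Field K] [Algebra ℚ_[2] K]
    (hquad : Module.finrank ℚ_[2] K = 2) (D : PadicValData 2 K) (hram : D.e = 2)
    (δ : ℕ)
    (hδ : ∀ x : K, (∀ y : K, (y = 0 ∨ 0 ≤ D.v y) →
        ‖Algebra.trace ℚ_[2] K (x * y)‖ ≤ 1) ↔ (x = 0 ∨ -(δ : ℤ) ≤ D.v x)) :
    δ = 2 ∨ δ = 3 := by
  classical
  open QuadAux in
  -- trace of an integral element is integral
  have hTr : ∀ y : K, (y = 0 ∨ 0 ≤ D.v y) → ‖Algebra.trace ℚ_[2] K y‖ ≤ 1 := by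
    have h1 := (hδ 1).2 (Or.inr (by rw [v_one D]; omega))
    intro y hy
    simpa using h1 y hy
  have halg2 : algebraMap ℚ_[2] K (2 : ℚ_[2]) ≠ 0 := alg_ne 2 two_ne_zero
  -- key wild-ramification fact: the trace of an integral element is divisible by 2
  have claimA : ∀ z : K, z ≠ 0 → 1 ≤ D.v z → ‖Algebra.trace ℚ_[2] K z‖ ≤ 1 / 2 := by
    intro z hz0 hz1
    rcases eq_or_lt_of_le hz1 with heq | hlt
    · -- v z = 1 : use the quadratic relation
      have hnr : ∀ a : ℚ_[2], algebraMap ℚ_[2] K a ≠ z := by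
        intro a ha
        have ha0 : a ≠ 0 := by
          intro h0; rw [h0, map_zero] at ha; exact hz0 ha.symm
        have := v_alg D hram a ha0
        rw [ha] at this
        omega
      obtain ⟨s, t, hrel, htr⟩ := quad_trace hquad z hnr
      rw [htr]
      apply norm_le_half
      by_contra hcon
      push_neg at hcon
      obtain ⟨ht0, htv⟩ := hcon
      have htv' : t.valuation ≤ 0 := by omega
      -- A = t z, B = z², then s = B - A has odd valuation: contradiction
      have hA0 : algebraMap ℚ_[2] K t * z ≠ 0 := mul_ne_zero (alg_ne t ht0) hz0
      have hB0 : z * z ≠ 0 := mul_ne_zero hz0 hz0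
      have hvA : D.v (algebraMap ℚ_[2] K t * z) = 2 * t.valuation + 1 := by
        rw [D.v_mul _ z (alg_ne t ht0) hz0, v_alg D hram t ht0]
        omega
      have hvB : D.v (z * z) = 2 := by
        rw [D.v_mul z z hz0 hz0]
        omega
      have hseq : algebraMap ℚ_[2] K s = -(algebraMap ℚ_[2] K t * z) + z * z := by
        rw [hrel]; ring
      have hvnA : D.v (-(algebraMap ℚ_[2] K t * z)) = 2 * t.valuation + 1 := by
        rw [v_neg D _ hA0, hvA]
      obtain ⟨hne, hv⟩ := v_strict D (-(algebraMap ℚ_[2] K t * z)) (z * z)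
        (neg_ne_zero.2 hA0) hB0 (by omega)
      rw [← hseq] at hne hv
      have hs0 : s ≠ 0 := by
        intro h0; rw [h0, map_zero] at hne; exact hne rfl
      rw [v_alg D hram s hs0, hvnA] at hv
      omega
    · -- v z ≥ 2 : write z = 2 g with g integral
      set g : K := (algebraMap ℚ_[2] K 2)⁻¹ * z with hg
      have hg0 : g ≠ 0 := mul_ne_zero (inv_ne_zero halg2) hz0
      have hgv : 0 ≤ D.v g := by
        rw [hg, D.v_mul _ z (inv_ne_zero halg2) hz0, v_inv D _ halg2,
          v_alg_two D hram]
        omega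
      have hzg : z = (2 : ℚ_[2]) • g := by
        rw [Algebra.smul_def, hg, ← mul_assoc, mul_inv_cancel₀ halg2, one_mul]
      rw [hzg, map_smul]
      rw [smul_eq_mul, norm_mul, QuadAux.norm_two_q]
      have := hTr g (Or.inr hgv)
      nlinarith [norm_nonneg (Algebra.trace ℚ_[2] K g)]
  -- the full wild fact
  have wild : ∀ y : K, (y = 0 ∨ 0 ≤ D.v y) → ‖Algebra.trace ℚ_[2] K y‖ ≤ 1 / 2 := by
    intro y hy
    by_cases hy0 : y = 0
    · simp [hy0]
    have hyv : 0 ≤ D.v y := hy.resolve_left hy0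
    have htr1 : Algebra.trace ℚ_[2] K 1 = 2 := by
      have h := Algebra.trace_algebraMap (R := ℚ_[2]) (S := K) (1 : ℚ_[2])
      rw [map_one, hquad] at h
      rw [h]
      norm_num
    rcases eq_or_lt_of_le hyv with heq | hpos
    · -- v y = 0
      by_cases hy1 : y = 1
      · rw [hy1, htr1, QuadAux.norm_two_q]
      · have hz0 : y - 1 ≠ 0 := sub_ne_zero.2 hy1
        have hzv : 1 ≤ D.v (y - 1) := by
          have hge : 0 ≤ D.v (y - 1) := by
            have := D.v_add y (-1) hy0 (by norm_num) (by rw [← sub_eq_add_neg]; exact hz0)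
            rw [← sub_eq_add_neg, v_neg_one D] at this
            omega
          rcases eq_or_lt_of_le hge with heq1 | hlt1
          · exact absurd heq1.symm (fun hh =>
              QuadAux.residue hquad D hram y hy0 hy1 heq.symm hh)
          · omega
        have hdecomp : y = (y - 1) + 1 := by ring
        rw [hdecomp, map_add, htr1]
        have h1 := claimA (y - 1) hz0 hzv
        have h2 : ‖(2 : ℚ_[2])‖ = 1 / 2 := QuadAux.norm_two_q
        calc ‖Algebra.trace ℚ_[2] K (y - 1) + 2‖
            ≤ max ‖Algebra.trace ℚ_[2] K (y - 1)‖ ‖(2 : ℚ_[2])‖ :=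
              Padic.nonarchimedean _ _
          _ ≤ 1 / 2 := max_le h1 (le_of_eq h2)
    · exact claimA y hy0 hpos
  -- lower bound: δ ≥ 2
  have hlow : 2 ≤ δ := by
    set x : K := (algebraMap ℚ_[2] K 2)⁻¹ with hx
    have hx0 : x ≠ 0 := inv_ne_zero halg2
    have hxv : D.v x = -2 := by
      rw [hx, v_inv D _ halg2, v_alg_two D hram]
    have hLHS : ∀ y : K, (y = 0 ∨ 0 ≤ D.v y) →
        ‖Algebra.trace ℚ_[2] K (x * y)‖ ≤ 1 := by
      intro y hy
      have hxy : x * y = (2 : ℚ_[2])⁻¹ • y := by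
        rw [Algebra.smul_def, map_inv₀, hx]
      rw [hxy, map_smul, smul_eq_mul, norm_mul]
      rw [QuadAux.norm_two_inv_q]
      have := wild y hy
      linarith
    have := (hδ x).1 hLHS
    rcases this with h0 | hle
    · exact absurd h0 hx0
    · rw [hxv] at hle
      omega
  -- upper bound: δ ≤ 3
  have hhigh : δ ≤ 3 := by
    by_contra hcon
    push_neg at hcon
    obtain ⟨x, hx0, hxv⟩ := D.v_surj (-(δ : ℤ))
    have hRHS := (hδ x).2 (Or.inr (by rw [hxv]))
    set c : ℚ_[2] := 2⁻¹ * 2⁻¹ with hc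
    have hc0 : c ≠ 0 := by
      rw [hc]
      norm_num
    set y : K := algebraMap ℚ_[2] K c * x⁻¹ with hy
    have hy0 : y ≠ 0 := mul_ne_zero (alg_ne c hc0) (inv_ne_zero hx0)
    have hcval : c.valuation = -2 := by
      have hinv : ((2 : ℚ_[2])⁻¹).valuation = -1 := by
        have := Padic.valuation_mul (p := 2) (x := (2 : ℚ_[2]))
          (y := (2 : ℚ_[2])⁻¹) (by norm_num) (by norm_num)
        rw [mul_inv_cancel₀ (by norm_num : (2 : ℚ_[2]) ≠ 0), Padic.valuation_one,
          QuadAux.val_two_q] at this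
        omega
      rw [hc, Padic.valuation_mul (by norm_num) (by norm_num), hinv]
      omega
    have hyv : 0 ≤ D.v y := by
      rw [hy, D.v_mul _ _ (alg_ne c hc0) (inv_ne_zero hx0), v_alg D hram c hc0,
        v_inv D x hx0, hcval, hxv]
      omega
    have hbound := hRHS y (Or.inr hyv)
    have hxy : x * y = algebraMap ℚ_[2] K c := by
      rw [hy, mul_comm (algebraMap ℚ_[2] K c) x⁻¹, ← mul_assoc,
        mul_inv_cancel₀ hx0, one_mul]
    rw [hxy] at hbound
    have htrc : Algebra.trace ℚ_[2] K (algebraMap ℚ_[2] K c) = 2 * c := by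
      rw [Algebra.trace_algebraMap, hquad]
      ring
    rw [htrc] at hbound
    have : (2 : ℚ_[2]) * c = 2⁻¹ := by
      rw [hc, ← mul_assoc, mul_inv_cancel₀ (by norm_num : (2 : ℚ_[2]) ≠ 0), one_mul]
    rw [this] at hbound
    rw [QuadAux.norm_two_inv_q] at hbound
    norm_num at hbound
  omega
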